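/- Let p > 0 and γ_S, γ_I be constants with 0 ≤ γ_I < 1 and γ_S + γ_I > 0, and fix 0 < β. For α ∈ (0, β) at which ν({−α}) = 0, the map α ↦ Λ(α, β) is differentiable at α with ∂Λ(α, β)/∂α = −W(β−α) λ̂(α), where λ̂(α) = −(p + q γ_I) + (1 − γ_I) ν̄(α) and ν̄(α) = ν((−∞, −α)). -/

import Mathlib

open MeasureTheory Set Filter Topology

noncomputable section

/-- The Laplace exponent of a spectrally negative Lévy process with data `(γ, σ, ν)`. -/
def psi (γ σ : ℝ) (ν : Measure ℝ) (s : ℝ) : ℝ :=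
  γ * s + σ ^ 2 * s ^ 2 / 2 +
    ∫ z in Set.Iio (0 : ℝ), (Real.exp (s * z) - 1 - s * z * (if -1 < z then (1:ℝ) else 0)) ∂ν

/-- `Φ(q) = sup {λ ≥ 0 : ψ(λ) = q}`. -/
def PhiQ (γ σ : ℝ) (ν : Measure ℝ) (q : ℝ) : ℝ :=
  sSup {l : ℝ | 0 ≤ l ∧ psi γ σ ν l = q}

/-- `Z^{(q)}(x) = 1 + q ∫₀ˣ W(y) dy`. -/
def Zfun (q : ℝ) (W : ℝ → ℝ) (x : ℝ) : ℝ := 1 + q * ∫ y in (0:ℝ)..x, W y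

/-- `Z̄^{(q)}(x) = ∫₀ˣ Z(z) dz`. -/
def Zbar (q : ℝ) (W : ℝ → ℝ) (x : ℝ) : ℝ := ∫ z in (0:ℝ)..x, Zfun q W z

/-- `R^{(q)}(x) = Z̄(x) + ψ'(0+)/q`. -/
def Rfun (q psi'0 : ℝ) (W : ℝ → ℝ) (x : ℝ) : ℝ := Zbar q W x + psi'0 / q

/-- `Ψ(s; h) = ∫_s^∞ e^{-Φ(q)(y-s)} h(y) dy`. -/
def PsiInt (Φq s : ℝ) (h : ℝ → ℝ) : ℝ := ∫ y in Set.Ioi s, Real.exp (-Φq * (y - s)) * h y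

/-- `φ_s(x; h) = ∫_s^x W(x-y) h(y) dy`. -/
def phiInt (W : ℝ → ℝ) (s x : ℝ) (h : ℝ → ℝ) : ℝ := ∫ y in s..x, W (x - y) * h y

/-- Integrand of the nonlocal part of the generator `L`. -/
def genInt (h : ℝ → ℝ) (x z : ℝ) : ℝ :=
  h (x + z) - h x - deriv h x * z * (if -1 < z then (1:ℝ) else 0)

/-- The generator `L` of the Lévy process, applied to a sufficiently smooth function. -/
def Lgen (γ σ : ℝ) (ν : Measure ℝ) (h : ℝ → ℝ) (x : ℝ) : ℝ :=
  γ * deriv h x + σ ^ 2 / 2 * deriv (deriv h) x + ∫ z in Set.Iio (0 : ℝ), genInt h x z ∂ν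

/-- `ζ(x) = Z(x) − (q/Φ(q)) W(x)`. -/
def zeta (q Φq : ℝ) (W : ℝ → ℝ) (x : ℝ) : ℝ := Zfun q W x - q / Φq * W x

/-- Payoff when the sup player stops first:
`g_S(x) = 1_{x>0} [(p/q − γ_S) − (p/q + 1) ζ(x)]`. -/
def gSfun (q Φq p γS : ℝ) (W : ℝ → ℝ) (x : ℝ) : ℝ :=
  if 0 < x then (p / q - γS) - (p / q + 1) * zeta q Φq W x else 0

/-- Payoff when the inf player stops first:
`g_I(x) = 1_{x>0} [(p/q + γ_I) − (p/q + 1) ζ(x)]`. -/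
def gIfun (q Φq p γI : ℝ) (W : ℝ → ℝ) (x : ℝ) : ℝ :=
  if 0 < x then (p / q + γI) - (p / q + 1) * zeta q Φq W x else 0

/-- `Λ(α,β)` for the cancellation game. -/
def LamGame (q p γS γI : ℝ) (ν : Measure ℝ) (W : ℝ → ℝ) (α β : ℝ) : ℝ :=
  p / q - γS - (p / q + γI) * Zfun q W (β - α)
    + (1 - γI) / q * ∫ u in Set.Iio (-α), (Zfun q W (β - α) - Zfun q W (β + u)) ∂ν

/-- `λ(α,β)` for the cancellation game. -/
def lamGame (q p γI : ℝ) (ν : Measure ℝ) (W : ℝ → ℝ) (α β : ℝ) : ℝ :=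
  -(p + q * γI) * W (β - α)
    + (1 - γI) * ∫ u in Set.Iio (-α), (W (β - α) - W (β + u)) ∂ν

/-- Candidate value function for the cancellation game with thresholds `0 < α < β < ∞`. -/
def vGame (q Φq p γS γI : ℝ) (ν : Measure ℝ) (W : ℝ → ℝ) (α β : ℝ) (x : ℝ) : ℝ :=
  if x ≤ 0 then 0
  else if x ≤ α then gIfun q Φq p γI W x
  else if x < β then
    -(p / q + 1) * zeta q Φq W x + (p / q + γI) * Zfun q W (x - α)
      - (1 - γI) / q * ∫ u in Set.Iio (-α), (Zfun q W (x - α) - Zfun q W (x + u)) ∂ν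
  else gSfun q Φq p γS W x


namespace Stmt16Aux

variable {q : ℝ} {W : ℝ → ℝ}

lemma wmono (hWnonneg : ∀ x, 0 ≤ W x) (hWzero : ∀ x < 0, W x = 0)
    (hWmono : StrictMonoOn W (Set.Ici 0)) : Monotone W := by
  intro x y hxy
  rcases lt_or_ge x 0 with hx | hx
  · rw [hWzero x hx]; exact hWnonneg y
  · exact hWmono.monotoneOn hx (hx.trans hxy) hxy

lemma zmono (hq : 0 ≤ q) (hWnonneg : ∀ x, 0 ≤ W x) (hWm : Monotone W) :
    Monotone (Zfun q W) := by
  intro x y hxy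
  have h1 : ∫ t in (0:ℝ)..x, W t ≤ ∫ t in (0:ℝ)..y, W t := by
    rw [← intervalIntegral.integral_add_adjacent_intervals
      (hWm.intervalIntegrable (a := (0:ℝ)) (b := x))
      (hWm.intervalIntegrable (a := x) (b := y))]
    have h2 : 0 ≤ ∫ t in x..y, W t :=
      intervalIntegral.integral_nonneg hxy (fun u _ => hWnonneg u)
    linarith
  have := mul_le_mul_of_nonneg_left h1 hq
  simp only [Zfun]
  linarith

lemma zfun_nonpos (hWzero : ∀ x < 0, W x = 0) {x : ℝ} (hx : x ≤ 0) : Zfun q W x = 1 := by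
  have h0 : ∀ᵐ (t : ℝ), t ≠ (0:ℝ) := by
    rw [MeasureTheory.ae_iff]
    convert Real.volume_singleton (a := (0:ℝ)) using 2
    ext t; simp
  have h : ∫ t in x..(0:ℝ), W t = 0 := by
    have heq : ∫ t in x..(0:ℝ), W t = ∫ t in x..(0:ℝ), (0:ℝ) := by
      apply intervalIntegral.integral_congr_ae
      filter_upwards [h0] with t ht htmem
      rw [Set.uIoc_of_le hx] at htmem
      exact hWzero t (lt_of_le_of_ne htmem.2 ht)
    simpa using heq
  have h' : ∫ t in (0:ℝ)..x, W t = 0 := by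
    rw [intervalIntegral.integral_symm, h, neg_zero]
  simp [Zfun, h']

lemma zge1 (hq : 0 ≤ q) (hWnonneg : ∀ x, 0 ≤ W x) (hWzero : ∀ x < 0, W x = 0)
    (hWm : Monotone W) (x : ℝ) : 1 ≤ Zfun q W x := by
  rcases le_or_gt x 0 with hx | hx
  · rw [zfun_nonpos hWzero hx]
  · have := zmono hq hWnonneg hWm hx.le
    rw [zfun_nonpos hWzero le_rfl] at this
    exact this

lemma zderiv (hWm : Monotone W) (hWcont : ContinuousOn W (Set.Ici 0))
    {y : ℝ} (hy : 0 < y) : HasDerivAt (Zfun q W) (q * W y) y := by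
  have hci : ContinuousAt W y := hWcont.continuousAt (Ici_mem_nhds hy)
  have hmeas : StronglyMeasurableAtFilter W (𝓝 y) volume :=
    ⟨Set.univ, Filter.univ_mem, hWm.measurable.aestronglyMeasurable.restrict⟩
  have h := intervalIntegral.integral_hasDerivAt_right
    (hWm.intervalIntegrable (a := (0:ℝ)) (b := y)) hmeas hci
  have h2 := (h.const_mul q).const_add 1
  exact h2

lemma nufin {ν : Measure ℝ} (hνint : Integrable (fun z => min 1 (z ^ 2)) ν)
    {a : ℝ} (ha : 0 < a) : ν (Set.Iio (-a)) < ⊤ := by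
  have h := hνint.measure_ge_lt_top (ε := min 1 (a ^ 2)) (by positivity)
  refine lt_of_le_of_lt (measure_mono ?_) h
  intro z hz
  simp only [Set.mem_setOf_eq]
  have hz' : z < -a := hz
  have h2 : a ^ 2 ≤ z ^ 2 := by nlinarith
  exact le_min (min_le_left _ _) (le_trans (min_le_right _ _) h2)

end Stmt16Aux

theorem stmt16
    (γ σ q : ℝ) (ν : Measure ℝ) (W : ℝ → ℝ)
    (hσ : 0 ≤ σ)
    (hνconc : ν (Set.Ici 0) = 0)
    (hνint : Integrable (fun z => min 1 (z ^ 2)) ν)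
    (hψtop : Tendsto (psi γ σ ν) atTop atTop)
    (hq : 0 < q)
    (hΦpos : 0 < PhiQ γ σ ν q)
    (hWnonneg : ∀ x, 0 ≤ W x)
    (hWzero : ∀ x < 0, W x = 0)
    (hWcont : ContinuousOn W (Set.Ici 0))
    (hWmono : StrictMonoOn W (Set.Ici 0))
    (hWlaplace : ∀ s, PhiQ γ σ ν q < s →
      ∫ x in Set.Ioi (0:ℝ), Real.exp (-s * x) * W x = 1 / (psi γ σ ν s - q))
    (p γS γI : ℝ) (hp : 0 < p) (hγI0 : 0 ≤ γI) (hγI1 : γI < 1) (hγsum : 0 < γS + γI)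
    (β : ℝ) (hβ : 0 < β) :
    ∀ α, 0 < α → α < β → ν {(-α)} = 0 →
      HasDerivAt (fun a => LamGame q p γS γI ν W a β)
        (-(W (β - α) * (-(p + q * γI) + (1 - γI) * (ν (Set.Iio (-α))).toReal))) α := by
  intro α hα hαβ hνα
  have hWm : Monotone W := Stmt16Aux.wmono hWnonneg hWzero hWmono
  have hZm : Monotone (Zfun q W) := Stmt16Aux.zmono hq.le hWnonneg hWm
  have hZ1 : ∀ x, 1 ≤ Zfun q W x := Stmt16Aux.zge1 hq.le hWnonneg hWzero hWm
  have hZmeas : Measurable (Zfun q W) := hZm.measurable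
  set ε : ℝ := min (α / 2) ((β - α) / 2) with hεdef
  have hεα : ε ≤ α / 2 := min_le_left _ _
  have hεβ : ε ≤ (β - α) / 2 := min_le_right _ _
  have hεpos : 0 < ε := lt_min (by linarith) (by linarith)
  set μ : Measure ℝ := ν.restrict (Set.Iio (0:ℝ)) with hμ
  set F : ℝ → ℝ → ℝ := fun x u => max 0 (Zfun q W (β - x) - Zfun q W (β + u)) with hFdef
  set F' : ℝ → ℝ := fun u => if u < -α then -(q * W (β - α)) else 0 with hF'def
  set bound : ℝ → ℝ := fun u => if u < -(α - ε) then q * W β else 0 with hbdef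
  have hF0 : ∀ x u : ℝ, -x ≤ u → F x u = 0 := by
    intro x u hu
    simp only [hFdef]
    exact max_eq_left (sub_nonpos.2 (hZm (by linarith)))
  have hFval : ∀ x u : ℝ, u ≤ -x → F x u = Zfun q W (β - x) - Zfun q W (β + u) := by
    intro x u hu
    simp only [hFdef]
    exact max_eq_right (sub_nonneg.2 (hZm (by linarith)))
  have hFmeasg : ∀ x, Measurable (F x) := by
    intro x
    exact measurable_const.max
      (measurable_const.sub (hZmeas.comp (measurable_id.const_add β)))
  have hFmeas : ∀ x, AEStronglyMeasurable (F x) μ :=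
    fun x => (hFmeasg x).aestronglyMeasurable.restrict
  have hF'eq : F' = Set.indicator (Set.Iio (-α)) (fun _ => -(q * W (β - α))) := by
    funext u; simp [hF'def, Set.indicator_apply, Set.mem_Iio]
  have hF'meas : AEStronglyMeasurable F' μ := by
    rw [hF'eq]
    exact (measurable_const.indicator measurableSet_Iio).aestronglyMeasurable.restrict
  have hμle : ∀ s : Set ℝ, MeasurableSet s → μ s ≤ ν s := by
    intro s hs
    rw [hμ, Measure.restrict_apply hs]
    exact measure_mono Set.inter_subset_left
  have hIndInt : ∀ (c t : ℝ), 0 < t → Integrable (fun u => if u < -t then c else 0) μ := by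
    intro c t ht
    have heq : (fun u : ℝ => if u < -t then c else 0)
        = Set.indicator (Set.Iio (-t)) (fun _ => c) := by
      funext u; simp [Set.indicator_apply, Set.mem_Iio]
    rw [heq, integrable_indicator_iff measurableSet_Iio]
    refine integrableOn_const (ne_of_lt ?_) enorm_ne_top
    exact lt_of_le_of_lt (hμle _ measurableSet_Iio) (Stmt16Aux.nufin hνint ht)
  have hFbdd : ∀ x u : ℝ, 0 ≤ x → ‖F x u‖ ≤ Zfun q W β := by
    intro x u hx
    have h1 : 1 ≤ Zfun q W (β + u) := hZ1 _
    have h2 : Zfun q W (β - x) ≤ Zfun q W β := hZm (by linarith)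
    have h3 : (0:ℝ) ≤ Zfun q W β := le_trans zero_le_one (hZ1 β)
    simp only [hFdef]
    rw [Real.norm_eq_abs, abs_of_nonneg (le_max_left _ _)]
    exact max_le h3 (by linarith)
  have hFint : Integrable (F α) μ := by
    refine (hIndInt (Zfun q W β) α hα).mono' (hFmeas α) ?_
    filter_upwards with u
    by_cases hu : u < -α
    · rw [if_pos hu]; exact hFbdd α u hα.le
    · rw [if_neg hu, hF0 α u (not_lt.1 hu)]; simp
  have hboundint : Integrable bound μ := hIndInt _ _ (by linarith)
  have hballpos : ∀ x ∈ Metric.ball α ε, α - ε < x ∧ x < α + ε := by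
    intro x hx
    rw [Metric.mem_ball, Real.dist_eq, abs_lt] at hx
    constructor <;> linarith [hx.1, hx.2]
  have hZlip : ∀ x ∈ Metric.ball α ε, ∀ y ∈ Metric.ball α ε,
      |Zfun q W (β - x) - Zfun q W (β - y)| ≤ q * W β * |x - y| := by
    intro x hx y hy
    obtain ⟨hx1, hx2⟩ := hballpos x hx
    obtain ⟨hy1, hy2⟩ := hballpos y hy
    have e1 : Zfun q W (β - x) - Zfun q W (β - y) = q * ∫ t in (β - y)..(β - x), W t := by
      simp only [Zfun]
      rw [← intervalIntegral.integral_add_adjacent_intervals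
        (hWm.intervalIntegrable (a := (0:ℝ)) (b := β - y))
        (hWm.intervalIntegrable (a := β - y) (b := β - x))]
      ring
    rw [e1, abs_mul, abs_of_nonneg hq.le]
    have e2 : ‖∫ t in (β - y)..(β - x), W t‖ ≤ W β * |(β - x) - (β - y)| := by
      apply intervalIntegral.norm_integral_le_of_norm_le_const
      intro t ht
      rw [Real.norm_eq_abs, abs_of_nonneg (hWnonneg t)]
      have hmax : t ≤ β := le_trans ht.2 (max_le (by linarith) (by linarith))
      exact hWm hmax
    rw [Real.norm_eq_abs] at e2
    have e3 : q * |∫ t in (β - y)..(β - x), W t| ≤ q * (W β * |(β - x) - (β - y)|) :=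
      mul_le_mul_of_nonneg_left e2 hq.le
    have e4 : |(β - x) - (β - y)| = |x - y| := by
      rw [show (β - x) - (β - y) = -(x - y) by ring, abs_neg]
    rw [e4] at e3
    rw [mul_assoc]
    exact e3
  have hlip : ∀ u : ℝ, LipschitzOnWith (Real.nnabs (bound u))
      (fun x => F x u) (Metric.ball α ε) := by
    intro u
    apply LipschitzOnWith.of_dist_le_mul
    intro x hx y hy
    rcases lt_or_ge u (-(α - ε)) with hu | hu
    · have hbu : bound u = q * W β := by rw [hbdef]; exact if_pos hu
      rw [hbu, Real.dist_eq, Real.dist_eq]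
      calc |F x u - F y u|
          ≤ |(Zfun q W (β - x) - Zfun q W (β + u))
              - (Zfun q W (β - y) - Zfun q W (β + u))| := by
            simp only [hFdef]
            rw [max_comm (0:ℝ) (Zfun q W (β - x) - Zfun q W (β + u)),
              max_comm (0:ℝ) (Zfun q W (β - y) - Zfun q W (β + u))]
            exact abs_max_sub_max_le_abs _ _ 0
        _ = |Zfun q W (β - x) - Zfun q W (β - y)| := by rw [sub_sub_sub_cancel_right]
        _ ≤ q * W β * |x - y| := hZlip x hx y hy
        _ ≤ (Real.nnabs (q * W β) : ℝ) * |x - y| := by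
            rw [Real.coe_nnabs, abs_of_nonneg (mul_nonneg hq.le (hWnonneg β))]
    · have hx0 := hballpos x hx
      have hy0 := hballpos y hy
      rw [hF0 x u (by linarith [hx0.1]), hF0 y u (by linarith [hy0.1])]
      simp only [dist_self]
      positivity
  have hZda : HasDerivAt (fun a => Zfun q W (β - a)) (-(q * W (β - α))) α := by
    have h1 : HasDerivAt (fun x : ℝ => β - x) (-1) α := (hasDerivAt_id α).const_sub β
    have h2 := (Stmt16Aux.zderiv (q := q) hWm hWcont (show (0:ℝ) < β - α by linarith)).comp α h1
    exact h2.congr_deriv (by ring)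
  have hdiff : ∀ᵐ u ∂μ, HasDerivAt (fun x => F x u) (F' u) α := by
    have hkey : ∀ u : ℝ, u ∉ ({-α} ∪ Set.Ici (0:ℝ) : Set ℝ) →
        HasDerivAt (fun x => F x u) (F' u) α := by
      intro u hu
      simp only [Set.mem_union, Set.mem_singleton_iff, Set.mem_Ici, not_or, not_le] at hu
      obtain ⟨hune, hult⟩ := hu
      rcases lt_or_gt_of_ne hune with h | h
      · have hev : (fun x => F x u) =ᶠ[𝓝 α]
            fun x => Zfun q W (β - x) - Zfun q W (β + u) := by
          filter_upwards [Iio_mem_nhds (show α < -u by linarith)] with x hx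
          simp only [Set.mem_Iio] at hx
          exact hFval x u (by linarith)
        have hfu : F' u = -(q * W (β - α)) := by rw [hF'def]; exact if_pos h
        rw [hfu]
        exact ((hZda.sub_const (Zfun q W (β + u)))).congr_of_eventuallyEq hev
      · have hev : (fun x => F x u) =ᶠ[𝓝 α] fun _ => (0:ℝ) := by
          filter_upwards [Ioi_mem_nhds (show -u < α by linarith)] with x hx
          simp only [Set.mem_Ioi] at hx
          exact hF0 x u (by linarith)
        have hfu : F' u = 0 := by rw [hF'def]; exact if_neg (not_lt.2 h.le)
        rw [hfu]
        exact (hasDerivAt_const α (0:ℝ)).congr_of_eventuallyEq hev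
    rw [MeasureTheory.ae_iff]
    refine measure_mono_null (t := ({-α} ∪ Set.Ici (0:ℝ) : Set ℝ)) ?_ ?_
    · intro u hu
      by_contra hc
      exact hu (hkey u hc)
    · refine measure_union_null ?_ ?_
      · exact le_zero_iff.1 (hνα ▸ hμle _ (measurableSet_singleton _))
      · exact le_zero_iff.1 (hνconc ▸ hμle _ measurableSet_Ici)
  obtain ⟨-, hG⟩ := hasDerivAt_integral_of_dominated_loc_of_lip (μ := μ) (x₀ := α)
    (F := F) (F' := F') (bound := bound) (Metric.ball_mem_nhds α hεpos)
    (Filter.Eventually.of_forall hFmeas) hFint hF'meas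
    (Filter.Eventually.of_forall hlip) hboundint hdiff
  have hF'int : ∫ u, F' u ∂μ = -(q * W (β - α)) * (ν (Set.Iio (-α))).toReal := by
    rw [hF'eq, MeasureTheory.integral_indicator measurableSet_Iio,
      MeasureTheory.setIntegral_const, measureReal_def, Measure.restrict_apply measurableSet_Iio]
    rw [Set.inter_eq_left.2 (Set.Iio_subset_Iio (by linarith : -α ≤ 0))]
    rw [smul_eq_mul]
    ring
  rw [hF'int] at hG
  have heq : (fun a => LamGame q p γS γI ν W a β) =ᶠ[𝓝 α]
      (fun a => p / q - γS - (p / q + γI) * Zfun q W (β - a)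
        + (1 - γI) / q * ∫ u, F a u ∂μ) := by
    filter_upwards [Ioo_mem_nhds hα hαβ] with a ha
    obtain ⟨ha0, haβ⟩ := ha
    have hsplit : ∫ u, F a u ∂μ
        = ∫ u in Set.Iio (-a), (Zfun q W (β - a) - Zfun q W (β + u)) ∂ν := by
      have hunion : Set.Iio (-a) ∪ Set.Ico (-a) 0 = Set.Iio (0:ℝ) :=
        Set.Iio_union_Ico_eq_Iio (by linarith)
      have hdisj : Disjoint (Set.Iio (-a)) (Set.Ico (-a) (0:ℝ)) := by
        rw [Set.disjoint_left]; intro u h1 h2; exact absurd h2.1 (not_le.2 h1)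
      have hint1 : IntegrableOn (F a) (Set.Iio (-a)) ν := by
        refine Integrable.mono' (integrableOn_const (ne_of_lt (Stmt16Aux.nufin hνint ha0)) enorm_ne_top)
          ((hFmeasg a).aestronglyMeasurable.restrict)
          (ae_of_all _ fun u => hFbdd a u ha0.le)
      have hint2 : IntegrableOn (F a) (Set.Ico (-a) 0) ν := by
        exact (integrableOn_zero).congr_fun (fun u hu => (hF0 a u hu.1).symm) measurableSet_Ico
      rw [hμ, ← hunion, MeasureTheory.setIntegral_union hdisj measurableSet_Ico hint1 hint2]
      rw [MeasureTheory.setIntegral_congr_fun measurableSet_Iio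
        (fun u hu => hFval a u (le_of_lt hu))]
      rw [MeasureTheory.setIntegral_congr_fun (g := fun _ => (0:ℝ)) measurableSet_Ico
        (fun u hu => hF0 a u hu.1)]
      simp
    simp only [LamGame]
    rw [hsplit]
  have hmain := ((hasDerivAt_const α (p / q - γS)).sub (hZda.const_mul (p / q + γI))).add
    (hG.const_mul ((1 - γI) / q))
  have hfinal := hmain.congr_of_eventuallyEq heq
  refine hfinal.congr_deriv ?_
  have hq0 : q ≠ 0 := ne_of_gt hq
  have hqq : q * q⁻¹ = 1 := mul_inv_cancel₀ hq0
  linear_combination (p * W (β - α) - (1 - γI) * W (β - α) * (ν (Set.Iio (-α))).toReal) * hqq
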